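/- For any policy π and any function Q : S×A → ℝ with ‖Q‖_∞ ≤ R_max/(1−γ), the Bellman operators of the true MDP and the learned MDP differ pointwise by at most the model error: for all (s,a), |(T_M^π Q)(s,a) − (T_M̂^π Q)(s,a)| ≤ ε_r(s,a) + (2γ·R_max/(1−γ))·D(s,a). -/
import Mathlib


open Finset

noncomputable section

variable {S A : Type*}

/-- t-step state distribution of the Markov chain induced by policy `π` and kernel `T`
starting from `ρ0`. -/
def stateDist [Fintype S] [Fintype A] (ρ0 : S → ℝ) (π : S → A → ℝ)
    (T : S → A → S → ℝ) : ℕ → S → ℝ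
  | 0 => ρ0
  | t + 1 => fun s' => ∑ s : S, ∑ a : A, stateDist ρ0 π T t s * π s a * T s a s'

/-- Discounted occupancy measure over states: `d_M^π(s) = (1-γ) ∑_t γ^t Pr(s_t = s)`. -/
def occ [Fintype S] [Fintype A] (γ : ℝ) (ρ0 : S → ℝ) (π : S → A → ℝ)
    (T : S → A → S → ℝ) (s : S) : ℝ :=
  (1 - γ) * ∑' t : ℕ, γ ^ t * stateDist ρ0 π T t s

/-- Discounted state-action occupancy measure: `d_M^π(s,a) = d_M^π(s) π(a|s)`. -/
def occSA [Fintype S] [Fintype A] (γ : ℝ) (ρ0 : S → ℝ) (π : S → A → ℝ)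
    (T : S → A → S → ℝ) (s : S) (a : A) : ℝ :=
  occ γ ρ0 π T s * π s a

/-- Discounted return `J(M,π) = (1/(1-γ)) ∑_{s,a} d_M^π(s,a) r(s,a)`. -/
def Jret [Fintype S] [Fintype A] (γ : ℝ) (ρ0 : S → ℝ) (π : S → A → ℝ)
    (T : S → A → S → ℝ) (r : S → A → ℝ) : ℝ :=
  (1 / (1 - γ)) * ∑ s : S, ∑ a : A, occSA γ ρ0 π T s a * r s a

/-- Bellman operator of policy `π` under reward `r` and transition kernel `T`. -/
def bellman [Fintype S] [Fintype A] (γ : ℝ) (r : S → A → ℝ) (T : S → A → S → ℝ)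
    (π : S → A → ℝ) (Q : S → A → ℝ) (s : S) (a : A) : ℝ :=
  r s a + γ * ∑ s' : S, T s a s' * ∑ a' : A, π s' a' * Q s' a'

/-- Total variation distance between two finitely supported distributions. -/
def tvDist [Fintype S] (p q : S → ℝ) : ℝ := (1 / 2) * ∑ s : S, |p s - q s|

/-- `π` is a policy: `π(·|s)` is a probability distribution on actions for each `s`. -/
def IsPolicy [Fintype A] (π : S → A → ℝ) : Prop :=
  (∀ s a, 0 ≤ π s a) ∧ ∀ s, ∑ a : A, π s a = 1

/-- `T` is a transition kernel: `T(·|s,a)` is a probability distribution on states. -/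
def IsKernel [Fintype S] (T : S → A → S → ℝ) : Prop :=
  (∀ s a s', 0 ≤ T s a s') ∧ ∀ s a, ∑ s' : S, T s a s' = 1

/-- Lemma 1, second part: the Bellman operators of the true MDP `M`
and the learned MDP `M̂` differ pointwise by at most the model error. -/
theorem bellman_model_error [Fintype S] [Fintype A]
    (γ Rmax : ℝ) (hγ0 : 0 < γ) (hγ1 : γ < 1)
    (rM rMhat : S → A → ℝ) (TM TMhat : S → A → S → ℝ)
    (hTM : IsKernel TM) (hTMhat : IsKernel TMhat)
    (hr : ∀ s a, |rM s a| ≤ Rmax)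
    (π : S → A → ℝ) (hπ : IsPolicy π)
    (Q : S → A → ℝ) (hQ : ∀ s a, |Q s a| ≤ Rmax / (1 - γ)) :
    ∀ s a, |bellman γ rM TM π Q s a - bellman γ rMhat TMhat π Q s a| ≤
      |rM s a - rMhat s a| + (2 * γ * Rmax / (1 - γ)) * tvDist (TM s a) (TMhat s a) := by
  obtain ⟨hπ0, hπ1⟩ := hπ
  intro s a
  have h1γ : (0:ℝ) < 1 - γ := by linarith
  set V : S → ℝ := fun s' => ∑ a' : A, π s' a' * Q s' a' with hV
  have hVb : ∀ s', |V s'| ≤ Rmax / (1 - γ) := by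
    intro s'
    calc |V s'| ≤ ∑ a' : A, |π s' a' * Q s' a'| := Finset.abs_sum_le_sum_abs _ _
      _ ≤ ∑ a' : A, π s' a' * (Rmax / (1 - γ)) := by
          apply Finset.sum_le_sum; intro a' _
          rw [abs_mul, abs_of_nonneg (hπ0 s' a')]
          exact mul_le_mul_of_nonneg_left (hQ s' a') (hπ0 s' a')
      _ = Rmax / (1 - γ) := by rw [← Finset.sum_mul, hπ1 s', one_mul]
  have key : bellman γ rM TM π Q s a - bellman γ rMhat TMhat π Q s a
      = (rM s a - rMhat s a) + γ * ∑ s' : S, (TM s a s' - TMhat s a s') * V s' := by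
    simp only [bellman, sub_mul, Finset.sum_sub_distrib]
    ring
  rw [key]
  have hRmax : 0 ≤ Rmax := le_trans (abs_nonneg _) (hr s a)
  have hsum : |∑ s' : S, (TM s a s' - TMhat s a s') * V s'|
      ≤ (∑ s' : S, |TM s a s' - TMhat s a s'|) * (Rmax / (1 - γ)) := by
    calc |∑ s' : S, (TM s a s' - TMhat s a s') * V s'|
        ≤ ∑ s' : S, |(TM s a s' - TMhat s a s') * V s'| := Finset.abs_sum_le_sum_abs _ _
      _ ≤ ∑ s' : S, |TM s a s' - TMhat s a s'| * (Rmax / (1 - γ)) := by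
          apply Finset.sum_le_sum; intro s' _
          rw [abs_mul]
          exact mul_le_mul_of_nonneg_left (hVb s') (abs_nonneg _)
      _ = (∑ s' : S, |TM s a s' - TMhat s a s'|) * (Rmax / (1 - γ)) := by
          rw [Finset.sum_mul]
  have habs : |(rM s a - rMhat s a) + γ * ∑ s' : S, (TM s a s' - TMhat s a s') * V s'|
      ≤ |rM s a - rMhat s a| + γ * |∑ s' : S, (TM s a s' - TMhat s a s') * V s'| := by
    calc _ ≤ |rM s a - rMhat s a| + |γ * ∑ s' : S, (TM s a s' - TMhat s a s') * V s'| :=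
          abs_add_le _ _
      _ = _ := by rw [abs_mul, abs_of_pos hγ0]
  refine habs.trans ?_
  have : γ * |∑ s' : S, (TM s a s' - TMhat s a s') * V s'|
      ≤ (2 * γ * Rmax / (1 - γ)) * tvDist (TM s a) (TMhat s a) := by
    unfold tvDist
    have := mul_le_mul_of_nonneg_left hsum hγ0.le
    calc γ * |∑ s' : S, (TM s a s' - TMhat s a s') * V s'|
        ≤ γ * ((∑ s' : S, |TM s a s' - TMhat s a s'|) * (Rmax / (1 - γ))) := this
      _ = (2 * γ * Rmax / (1 - γ)) * ((1/2) * ∑ s' : S, |TM s a s' - TMhat s a s'|) := by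
          ring
  linarith
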